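/- Let z ∈ U and suppose c ∈ ℝⁿ is a circumcenter for z, i.e. c belongs to the affine span of {z, R(z), R_U(R(z))} and ‖c − z‖ = ‖c − R(z)‖ = ‖c − R_U(R(z))‖. Then c ∈ U. -/

import Mathlib

open RealInnerProductSpace

/-- An operator is firmly nonexpansive if
`‖T x - T y‖² ≤ ‖x - y‖² - ‖(T x - T y) - (x - y)‖²` for all `x, y`. -/
def FirmlyNonexpansive {n : ℕ} (T : EuclideanSpace ℝ (Fin n) → EuclideanSpace ℝ (Fin n)) : Prop :=
  ∀ x y, ‖T x - T y‖ ^ 2 ≤ ‖x - y‖ ^ 2 - ‖(T x - T y) - (x - y)‖ ^ 2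

/-- `P` is the orthogonal projection onto `C`: for each `x`, `P x ∈ C` and `P x`
minimizes the distance from `x` to points of `C`. -/
def IsProjOn {n : ℕ} (C : Set (EuclideanSpace ℝ (Fin n)))
    (P : EuclideanSpace ℝ (Fin n) → EuclideanSpace ℝ (Fin n)) : Prop :=
  ∀ x, P x ∈ C ∧ ∀ y ∈ C, ‖x - P x‖ ≤ ‖x - y‖

/-- Projection onto an affine set is orthogonal: the residual is orthogonal to
differences of points of the set. -/
theorem proj_orth_aux {n : ℕ} (U : Set (EuclideanSpace ℝ (Fin n)))
    (hUaff : ∀ x ∈ U, ∀ y ∈ U, ∀ t : ℝ, t • x + (1 - t) • y ∈ U)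
    (PU : EuclideanSpace ℝ (Fin n) → EuclideanSpace ℝ (Fin n))
    (hPU : IsProjOn U PU)
    (w : EuclideanSpace ℝ (Fin n)) (u : EuclideanSpace ℝ (Fin n)) (hu : u ∈ U) :
    ⟪w - PU w, u - PU w⟫ = (0 : ℝ) := by
  set p := PU w with hp
  have hpU := (hPU w).1
  have hq : ∀ t : ℝ, 2 * t * ⟪w - p, u - p⟫ ≤ t ^ 2 * ‖u - p‖ ^ 2 := by
    intro t
    have hmem : t • u + (1 - t) • p ∈ U := hUaff u hu p hpU t
    have hle := (hPU w).2 _ hmem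
    have hsq : ‖w - p‖ ^ 2 ≤ ‖w - (t • u + (1 - t) • p)‖ ^ 2 :=
      pow_le_pow_left₀ (norm_nonneg _) hle 2
    have heq : w - (t • u + (1 - t) • p) = (w - p) - t • (u - p) := by module
    have expand : ‖(w - p) - t • (u - p)‖ ^ 2
        = ‖w - p‖ ^ 2 - 2 * t * ⟪w - p, u - p⟫ + t ^ 2 * ‖u - p‖ ^ 2 := by
      rw [norm_sub_sq_real, real_inner_smul_right, norm_smul, mul_pow]
      simp [sq_abs]; ring
    rw [heq, expand] at hsq
    linarith
  set K : ℝ := ⟪w - p, u - p⟫ with hKdef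
  set M : ℝ := ‖u - p‖ ^ 2 with hMdef
  have hM : 0 ≤ M := by positivity
  have h1p : (0:ℝ) < M + 1 := by linarith
  have hK := hq (K / (M + 1))
  have h1p' : (M + 1) ≠ 0 := ne_of_gt h1p
  field_simp at hK
  have hK0 : K = 0 := pow_eq_zero_iff (n := 2) (by norm_num) |>.1 (by nlinarith [sq_nonneg K, mul_nonneg hM (sq_nonneg K)])
  nlinarith [sq_nonneg K, hK, hM, h1p, mul_pos h1p (show (0:ℝ) < M + 2 by linarith)]

/-- If `z ∈ U` and `c` is a circumcenter of `z`, `R(z)`, `R_U(R(z))` (where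
`R = 2T − I` and `R_U = 2P_U − I`), then `c ∈ U`. -/
theorem circumcenter_mem_affine {n : ℕ}
    (T : EuclideanSpace ℝ (Fin n) → EuclideanSpace ℝ (Fin n))
    (hT : FirmlyNonexpansive T)
    (U : Set (EuclideanSpace ℝ (Fin n))) (hUne : U.Nonempty)
    (hUaff : ∀ x ∈ U, ∀ y ∈ U, ∀ t : ℝ, t • x + (1 - t) • y ∈ U)
    (PU : EuclideanSpace ℝ (Fin n) → EuclideanSpace ℝ (Fin n))
    (hPU : IsProjOn U PU)
    (R RU : EuclideanSpace ℝ (Fin n) → EuclideanSpace ℝ (Fin n))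
    (hR : ∀ x, R x = (2 : ℝ) • T x - x) (hRU : ∀ x, RU x = (2 : ℝ) • PU x - x)
    (z c : EuclideanSpace ℝ (Fin n)) (hz : z ∈ U)
    (hspan : c ∈ affineSpan ℝ ({z, R z, RU (R z)} : Set (EuclideanSpace ℝ (Fin n))))
    (h1 : ‖c - z‖ = ‖c - R z‖) (h2 : ‖c - z‖ = ‖c - RU (R z)‖) :
    c ∈ U := by
  set w := R z with hw
  set w' := RU (R z) with hw'def
  set p := PU w with hpdef
  have hpU : p ∈ U := (hPU w).1
  have hw' : w' = (2 : ℝ) • p - w := hRU w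
  -- decompose c
  have hzmem : z ∈ ({z, w, w'} : Set (EuclideanSpace ℝ (Fin n))) := by simp
  have hd : c -ᵥ z ∈ (affineSpan ℝ ({z, w, w'} : Set (EuclideanSpace ℝ (Fin n)))).direction :=
    AffineSubspace.vsub_mem_direction hspan (mem_affineSpan ℝ hzmem)
  rw [direction_affineSpan, vectorSpan_eq_span_vsub_set_right ℝ hzmem] at hd
  have himg : ((· -ᵥ z) '' ({z, w, w'} : Set (EuclideanSpace ℝ (Fin n))))
      = {0, w - z, w' - z} := by
    simp [Set.image_insert_eq, vsub_eq_sub, sub_self]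
  rw [himg, Submodule.span_insert_zero, Submodule.mem_span_pair] at hd
  obtain ⟨s, t, hst⟩ := hd
  rw [vsub_eq_sub] at hst
  rw [hw'] at hst
  -- orthogonality
  have horthz : ⟪w - p, z - p⟫ = (0 : ℝ) := proj_orth_aux U hUaff PU hPU w z hz
  -- c - p decomposition
  have hc : c - p = (1 - s - t) • (z - p) + (s - t) • (w - p) := by
    linear_combination (norm := module) (-1 : ℝ) • hst
  -- perpendicular bisector condition
  have hcw : ‖c - w‖ = ‖c - w'‖ := h1.symm.trans h2
  have hinner0 : ⟪c - p, w - p⟫ = (0 : ℝ) := by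
    have e1 : c - w = (c - p) - (w - p) := by module
    have e2 : c - w' = (c - p) + (w - p) := by rw [hw']; module
    have hsq : ‖c - w‖ ^ 2 = ‖c - w'‖ ^ 2 := by rw [hcw]
    rw [e1, e2, norm_sub_sq_real, norm_add_sq_real] at hsq
    linarith
  have key : (s - t) * ‖w - p‖ ^ 2 = 0 := by
    have hin : ⟪c - p, w - p⟫ = (s - t) * ‖w - p‖ ^ 2 := by
      have h0 : ⟪z - p, w - p⟫ = (0 : ℝ) := by rw [real_inner_comm]; exact horthz
      rw [hc, inner_add_left, real_inner_smul_left, real_inner_smul_left,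
        real_inner_self_eq_norm_sq, h0]
      ring
    rw [← hin, hinner0]
  have hzero : (s - t) • (w - p) = (0 : EuclideanSpace ℝ (Fin n)) := by
    rcases mul_eq_zero.1 key with h | h
    · rw [h, zero_smul]
    · have hwp : w - p = 0 := by
        have := pow_eq_zero_iff (n := 2) (by norm_num) |>.1 h
        exact norm_eq_zero.1 this
      rw [hwp, smul_zero]
  have hc2 : c = (s + t) • p + (1 - (s + t)) • z := by
    linear_combination (norm := module) (-1 : ℝ) • hst + hzero
  rw [hc2]
  exact hUaff p hpU z hz (s + t)
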